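/- For the flattened exponential loss with temperature a > 0, defined by ℓ(z) = e^{-az} for z > 0 and ℓ(z) = 1 - az for z ≤ 0, the function ρ(λ) := min_z (λ ℓ(z) + z²) satisfies ρ(λ) ≤ 1 + ln²(λ)/a² for all λ ≥ 1. -/
import Mathlib


/-- For the flattened exponential loss with temperature a > 0,
ρ(λ) = min_z (λ ℓ(z) + z²) ≤ 1 + ln²(λ)/a² for all λ ≥ 1. -/
theorem flattened_exp_rho_bound (a : ℝ) (ha : 0 < a) (lam : ℝ) (hlam : 1 ≤ lam) :
    sInf (Set.range fun z : ℝ =>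
        lam * (if 0 < z then Real.exp (-(a * z)) else 1 - a * z) + z ^ 2)
      ≤ 1 + (Real.log lam) ^ 2 / a ^ 2 := by
  have hlam0 : (0:ℝ) < lam := lt_of_lt_of_le one_pos hlam
  have hbdd : BddBelow (Set.range fun z : ℝ =>
      lam * (if 0 < z then Real.exp (-(a * z)) else 1 - a * z) + z ^ 2) := by
    refine ⟨0, ?_⟩
    rintro _ ⟨z, rfl⟩
    have hℓ : 0 ≤ (if 0 < z then Real.exp (-(a * z)) else 1 - a * z) := by
      split_ifs with h
      · exact (Real.exp_pos _).le
      · nlinarith [mul_nonpos_of_nonneg_of_nonpos ha.le (not_lt.mp h)]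
    positivity
  have key : (fun z : ℝ =>
      lam * (if 0 < z then Real.exp (-(a * z)) else 1 - a * z) + z ^ 2)
      (Real.log lam / a) = 1 + (Real.log lam) ^ 2 / a ^ 2 := by
    rcases eq_or_lt_of_le hlam with h1 | h1
    · simp [← h1]
    · have hlog : 0 < Real.log lam := Real.log_pos h1
      have hz : 0 < Real.log lam / a := div_pos hlog ha
      simp only [if_pos hz]
      have : a * (Real.log lam / a) = Real.log lam := by field_simp
      rw [this, Real.exp_neg, Real.exp_log hlam0]
      field_simp
  calc sInf _ ≤ _ := csInf_le hbdd ⟨Real.log lam / a, rfl⟩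
   _ = _ := key
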